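/- Let T : C → C be k-strictly pseudocontractive with Fix(T) ≠ ∅, and let {α_n} ⊆ (k, 1) satisfy Σ_{n}(α_n − k)(1 − α_n) = ∞. Then the Mann iteration x_{n+1} = α_n x_n + (1 − α_n) T x_n satisfies liminf_{n→∞} ‖x_n − T x_n‖ = 0. -/

import Mathlib

open Filter

open RealInnerProductSpace in
private lemma mann_norm_combo_sq {H : Type*} [NormedAddCommGroup H] [InnerProductSpace ℝ H]
    (t : ℝ) (a b : H) :
    ‖t • a + (1 - t) • b‖ ^ 2
      = t * ‖a‖ ^ 2 + (1 - t) * ‖b‖ ^ 2 - t * (1 - t) * ‖a - b‖ ^ 2 := by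
  have h : ∀ u : H, ‖u‖ ^ 2 = ⟪u, u⟫ := fun u => (real_inner_self_eq_norm_sq u).symm
  simp only [h, inner_add_left, inner_add_right, inner_sub_left, inner_sub_right,
    real_inner_smul_left, real_inner_smul_right, real_inner_comm a b]
  ring

theorem mann_liminf_residual_zero
    {H : Type*} [NormedAddCommGroup H] [InnerProductSpace ℝ H] [CompleteSpace H]
    (C : Set H) (hCc : IsClosed C) (hC : Convex ℝ C)
    (T : H → H) (hT : Set.MapsTo T C C)
    (k : ℝ) (hk0 : 0 ≤ k) (hk1 : k < 1)
    (hspc : ∀ x ∈ C, ∀ y ∈ C,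
      ‖T x - T y‖ ^ 2 ≤ ‖x - y‖ ^ 2 + k * ‖x - y - (T x - T y)‖ ^ 2)
    (hfix : ∃ p ∈ C, T p = p)
    (α : ℕ → ℝ) (hα : ∀ n, k < α n ∧ α n < 1)
    (hdiv : Tendsto (fun N => ∑ n ∈ Finset.range N, (α n - k) * (1 - α n)) atTop atTop)
    (x : ℕ → H) (hx0 : x 0 ∈ C)
    (hit : ∀ n, x (n + 1) = α n • x n + (1 - α n) • T (x n)) :
    Filter.liminf (fun n => ‖x n - T (x n)‖) atTop = 0 := by
  obtain ⟨p, hpC, hp⟩ := hfix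
  have hmem : ∀ n, x n ∈ C := by
    intro n
    induction n with
    | zero => exact hx0
    | succ n ih =>
        rw [hit n]
        exact hC ih (hT ih) (le_of_lt (lt_of_le_of_lt hk0 (hα n).1))
          (by linarith [(hα n).2]) (by ring)
  -- the basic pseudocontractive estimate at p
  have hcontr : ∀ n, ‖T (x n) - p‖ ^ 2 ≤ ‖x n - p‖ ^ 2 + k * ‖x n - T (x n)‖ ^ 2 := by
    intro n
    have hc := hspc (x n) (hmem n) p hpC
    rw [hp] at hc
    have hd : x n - p - (T (x n) - p) = x n - T (x n) := by abel
    rwa [hd] at hc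
  -- one-step decrease
  have key : ∀ n, ‖x (n + 1) - p‖ ^ 2
      ≤ ‖x n - p‖ ^ 2 - (α n - k) * (1 - α n) * ‖x n - T (x n)‖ ^ 2 := by
    intro n
    have hco : x (n + 1) - p = α n • (x n - p) + (1 - α n) • (T (x n) - p) := by
      rw [hit n]; module
    rw [hco, mann_norm_combo_sq]
    have hd : (x n - p) - (T (x n) - p) = x n - T (x n) := by abel
    rw [hd]
    have h1 := (hα n).1
    have h2 := (hα n).2
    nlinarith [hcontr n, sq_nonneg ‖x n - T (x n)‖]
  -- telescoping
  have htel : ∀ N, ∑ n ∈ Finset.range N, (α n - k) * (1 - α n) * ‖x n - T (x n)‖ ^ 2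
      + ‖x N - p‖ ^ 2 ≤ ‖x 0 - p‖ ^ 2 := by
    intro N
    induction N with
    | zero => simp
    | succ N ih =>
        rw [Finset.sum_range_succ]
        have := key N
        linarith
  have hterm_nonneg : ∀ n, 0 ≤ (α n - k) * (1 - α n) * ‖x n - T (x n)‖ ^ 2 := by
    intro n
    have h1 := (hα n).1
    have h2 := (hα n).2
    have : 0 ≤ (α n - k) * (1 - α n) := by nlinarith
    exact mul_nonneg this (sq_nonneg _)
  have hc_nonneg : ∀ n, 0 ≤ (α n - k) * (1 - α n) := by
    intro n
    have h1 := (hα n).1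
    have h2 := (hα n).2
    nlinarith
  have hsum_le : ∀ N, ∑ n ∈ Finset.range N, (α n - k) * (1 - α n) * ‖x n - T (x n)‖ ^ 2
      ≤ ‖x 0 - p‖ ^ 2 := fun N => by
    have := htel N
    nlinarith [sq_nonneg ‖x N - p‖]
  -- a uniform bound on ‖x n - p‖
  have ha_bd : ∀ n, ‖x n - p‖ ≤ ‖x 0 - p‖ := by
    intro n
    have h1 := htel n
    have h2 : ∀ N, 0 ≤ ∑ m ∈ Finset.range N, (α m - k) * (1 - α m) * ‖x m - T (x m)‖ ^ 2 :=
      fun N => Finset.sum_nonneg fun m _ => hterm_nonneg m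
    nlinarith [h2 n, norm_nonneg (x n - p), norm_nonneg (x 0 - p)]
  -- a uniform bound on the residuals
  set s : ℝ := Real.sqrt k with hs
  have hs0 : 0 ≤ s := Real.sqrt_nonneg k
  have hs1 : s < 1 := by
    rw [hs, show (1 : ℝ) = Real.sqrt 1 by simp]
    exact Real.sqrt_lt_sqrt hk0 hk1
  have hsk : s ^ 2 = k := Real.sq_sqrt hk0
  set R : ℝ := ‖x 0 - p‖ with hR
  set M : ℝ := 2 * R / (1 - s) with hM
  have hres_bd : ∀ n, ‖x n - T (x n)‖ ≤ M := by
    intro n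
    have hb : ‖T (x n) - p‖ ≤ ‖x n - p‖ + s * ‖x n - T (x n)‖ := by
      nlinarith [hcontr n, norm_nonneg (T (x n) - p), norm_nonneg (x n - p),
        norm_nonneg (x n - T (x n)), mul_nonneg hs0 (norm_nonneg (x n - T (x n)))]
    have he : ‖x n - T (x n)‖ ≤ ‖x n - p‖ + ‖T (x n) - p‖ := by
      have : x n - T (x n) = (x n - p) - (T (x n) - p) := by abel
      rw [this]
      exact norm_sub_le _ _
    have haR := ha_bd n
    rw [hM, le_div_iff₀ (by linarith : (0:ℝ) < 1 - s)]
    nlinarith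
  have hbdd : IsBoundedUnder (· ≤ ·) atTop (fun n => ‖x n - T (x n)‖) :=
    Filter.isBoundedUnder_of ⟨M, hres_bd⟩
  have hbdd' : IsBoundedUnder (· ≥ ·) atTop (fun n => ‖x n - T (x n)‖) :=
    Filter.isBoundedUnder_of ⟨0, fun n => norm_nonneg _⟩
  -- frequently small residuals
  have hfreq : ∀ ε : ℝ, 0 < ε → ∃ᶠ n in atTop, ‖x n - T (x n)‖ ≤ ε := by
    intro ε hε
    by_contra hcon
    rw [Filter.not_frequently] at hcon
    obtain ⟨N, hN⟩ := Filter.eventually_atTop.mp hcon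
    have hN' : ∀ n ≥ N, ε < ‖x n - T (x n)‖ := fun n hn => lt_of_not_ge (hN n hn)
    set B : ℝ := ∑ n ∈ Finset.range N, (α n - k) * (1 - α n) + R ^ 2 / ε ^ 2 with hB
    have hbound : ∀ m, ∑ n ∈ Finset.range m, (α n - k) * (1 - α n) ≤ B := by
      intro m
      rcases le_total m N with hmN | hNm
      · have h1 : ∑ n ∈ Finset.range m, (α n - k) * (1 - α n)
            ≤ ∑ n ∈ Finset.range N, (α n - k) * (1 - α n) :=
          Finset.sum_le_sum_of_subset_of_nonneg
            (Finset.range_subset_range.mpr hmN) (fun n _ _ => hc_nonneg n)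
        have h2 : 0 ≤ R ^ 2 / ε ^ 2 := by positivity
        rw [hB]; linarith
      · have hsplit : Finset.range m = Finset.range N ∪ Finset.Ico N m := by
          simp only [Finset.range_eq_Ico]
          exact (Finset.Ico_union_Ico_eq_Ico (Nat.zero_le N) hNm).symm
        have hdisj : Disjoint (Finset.range N) (Finset.Ico N m) := by
          simp [Finset.disjoint_left, Finset.mem_Ico]
          omega
        rw [hsplit, Finset.sum_union hdisj]
        have h3 : ∑ n ∈ Finset.Ico N m, (α n - k) * (1 - α n) * ε ^ 2
            ≤ ∑ n ∈ Finset.Ico N m, (α n - k) * (1 - α n) * ‖x n - T (x n)‖ ^ 2 := by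
          apply Finset.sum_le_sum
          intro n hn
          have hn' := (Finset.mem_Ico.mp hn).1
          have h := hN' n hn'
          have hcn := hc_nonneg n
          have hee : ε ^ 2 ≤ ‖x n - T (x n)‖ ^ 2 := by nlinarith
          exact mul_le_mul_of_nonneg_left hee hcn
        have h4 : ∑ n ∈ Finset.Ico N m, (α n - k) * (1 - α n) * ‖x n - T (x n)‖ ^ 2
            ≤ ∑ n ∈ Finset.range m, (α n - k) * (1 - α n) * ‖x n - T (x n)‖ ^ 2 := by
          apply Finset.sum_le_sum_of_subset_of_nonneg
          · rw [hsplit]; exact Finset.subset_union_right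
          · intro n _ _; exact hterm_nonneg n
        have h5 := hsum_le m
        have h6 : (∑ n ∈ Finset.Ico N m, (α n - k) * (1 - α n)) * ε ^ 2 ≤ R ^ 2 := by
          rw [Finset.sum_mul]
          calc ∑ n ∈ Finset.Ico N m, (α n - k) * (1 - α n) * ε ^ 2
              ≤ ∑ n ∈ Finset.Ico N m, (α n - k) * (1 - α n) * ‖x n - T (x n)‖ ^ 2 := h3
            _ ≤ ∑ n ∈ Finset.range m, (α n - k) * (1 - α n) * ‖x n - T (x n)‖ ^ 2 := h4
            _ ≤ R ^ 2 := h5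
        have h7 : ∑ n ∈ Finset.Ico N m, (α n - k) * (1 - α n) ≤ R ^ 2 / ε ^ 2 := by
          rw [le_div_iff₀ (by positivity : (0:ℝ) < ε ^ 2)]
          exact h6
        rw [hB]; linarith
    obtain ⟨m, hm⟩ := (hdiv.eventually_gt_atTop B).exists
    exact absurd (hbound m) (not_le.mpr hm)
  refine le_antisymm ?_ ?_
  · apply le_of_forall_pos_le_add
    intro ε hε
    have := Filter.liminf_le_of_frequently_le (hfreq ε hε) hbdd'
    linarith
  · exact Filter.le_liminf_of_le hbdd.isCoboundedUnder_ge
      (Filter.Eventually.of_forall fun n => norm_nonneg _)
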